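/- Let (Ω, 𝒜, μ) be a probability space, t₀ ≤ S real numbers, and (𝒢_t)_{t∈[t₀,S]} a filtration of sub-σ-algebras of 𝒜. Let M : [t₀,S] × Ω → ℝ be a jointly measurable adapted process that is a martingale, i.e. M(t,·) is integrable and E[M(s,·) | 𝒢_t] = M(t,·) μ-a.e. whenever t₀ ≤ t ≤ s ≤ S, and assume ∫_{t₀}^S E[|M(s,·)|] ds < ∞. Let β : [t₀,S] → ℝ be integrable and define q(t,ω) := exp(∫_t^S β(s) ds)·M(t,ω). Then for every t ∈ [t₀,S], q(t,·) = E[ M(S,·) + ∫_t^S β(s)·q(s,·) ds | 𝒢_t ] μ-a.e. -/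

import Mathlib

open MeasureTheory intervalIntegral
open scoped ENNReal

private lemma prim_cont {b : ℝ → ℝ} (hb : Integrable b) (S : ℝ) :
    Continuous fun s => ∫ u in s..S, b u := by
  have h := intervalIntegral.continuous_primitive (μ := volume)
    (fun a b' => hb.intervalIntegrable) S
  exact h.neg.congr fun x => by rw [intervalIntegral.integral_symm]; simp only [Pi.neg_apply]

private lemma prim_bound {b : ℝ → ℝ} (hb : Integrable b) (S s : ℝ) :
    |∫ u in s..S, b u| ≤ ∫ u, |b u| := by
  rcases le_total s S with h | h
  · calc |∫ u in s..S, b u| ≤ ∫ u in s..S, |b u| := by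
          simpa [Real.norm_eq_abs] using intervalIntegral.norm_integral_le_integral_norm (f := b) h
      _ = ∫ u in Set.Ioc s S, |b u| := intervalIntegral.integral_of_le h
      _ ≤ ∫ u, |b u| := setIntegral_le_integral hb.abs (Filter.Eventually.of_forall fun u => abs_nonneg _)
  · rw [intervalIntegral.integral_symm, abs_neg]
    calc |∫ u in S..s, b u| ≤ ∫ u in S..s, |b u| := by
          simpa [Real.norm_eq_abs] using intervalIntegral.norm_integral_le_integral_norm (f := b) h
      _ = ∫ u in Set.Ioc S s, |b u| := intervalIntegral.integral_of_le h
      _ ≤ ∫ u, |b u| := setIntegral_le_integral hb.abs (Filter.Eventually.of_forall fun u => abs_nonneg _)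

private lemma key_cont (b : ℝ → ℝ) (hb : Continuous b) (t S : ℝ) :
    ∫ s in t..S, b s * Real.exp (∫ u in s..S, b u)
      = Real.exp (∫ u in t..S, b u) - 1 := by
  have hD : ∀ s : ℝ, HasDerivAt (fun x => -Real.exp (∫ u in x..S, b u))
      (b s * Real.exp (∫ u in s..S, b u)) s := by
    intro s
    have h1 : HasDerivAt (fun x => ∫ u in x..S, b u) (-(b s)) s :=
      integral_hasDerivAt_left (hb.intervalIntegrable _ _)
        hb.stronglyMeasurable.stronglyMeasurableAtFilter hb.continuousAt
    have h3 := ((Real.hasDerivAt_exp _).comp s h1).neg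
    exact h3.congr_deriv (by ring)
  have hcont : Continuous fun s => b s * Real.exp (∫ u in s..S, b u) := by
    have h2 : Continuous fun s => ∫ u in s..S, b u := by
      have h := intervalIntegral.continuous_primitive (μ := volume)
        (fun a b' => hb.intervalIntegrable a b') S
      exact h.neg.congr fun x => by rw [intervalIntegral.integral_symm]; simp only [Pi.neg_apply]
    exact hb.mul (Real.continuous_exp.comp h2)
  rw [intervalIntegral.integral_eq_sub_of_hasDerivAt (fun x _ => hD x)
    (hcont.intervalIntegrable _ _)]
  simp [intervalIntegral.integral_same]; ring

private lemma key_integrable {b : ℝ → ℝ} (hb : Integrable b) {t S : ℝ} (hts : t ≤ S) :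
    ∫ s in t..S, b s * Real.exp (∫ u in s..S, b u)
      = Real.exp (∫ u in t..S, b u) - 1 := by
  set K := ∫ u, |b u| with hK
  have hK0 : 0 ≤ K := integral_nonneg fun u => abs_nonneg _
  set C := Real.exp (K + 1) with hC
  have hC0 : 0 < C := Real.exp_pos _
  set X := (∫ s in t..S, b s * Real.exp (∫ u in s..S, b u)) -
    (Real.exp (∫ u in t..S, b u) - 1) with hX
  have main : ∀ ε : ℝ, 0 < ε → ε ≤ 1 → |X| ≤ (3 * C + 2 * C * K) * ε := by
    intro ε hε hε1
    obtain ⟨g, gsupp, gapprox, gcont, gint⟩ := hb.exists_hasCompactSupport_integral_sub_le hε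
    have gapprox' : ∫ u, |b u - g u| ≤ ε := by simpa [Real.norm_eq_abs] using gapprox
    set P : ℝ → ℝ := fun s => ∫ u in s..S, b u with hP
    set Q : ℝ → ℝ := fun s => ∫ u in s..S, g u with hQ
    have hPb : ∀ s, |P s| ≤ K := fun s => prim_bound hb S s
    have hPQ : ∀ s, |P s - Q s| ≤ ε := by
      intro s
      have h1 : P s - Q s = ∫ u in s..S, (b u - g u) :=
        (intervalIntegral.integral_sub hb.intervalIntegrable gint.intervalIntegrable).symm
      rw [h1]
      exact (prim_bound (hb.sub gint) S s).trans gapprox'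
    have hQb : ∀ s, |Q s| ≤ K + 1 := by
      intro s
      have h1 := abs_le.mp (hPQ s)
      have h2 := abs_le.mp (hPb s)
      rw [abs_le]; constructor <;> linarith
    have hexpQ : ∀ s, Real.exp (Q s) ≤ C := by
      intro s
      exact Real.exp_le_exp.2 (abs_le.mp (hQb s)).2
    have hexpP : ∀ s, Real.exp (P s) ≤ C := by
      intro s
      refine Real.exp_le_exp.2 ?_
      have := (abs_le.mp (hPb s)).2; linarith
    have hexp : ∀ s, |Real.exp (P s) - Real.exp (Q s)| ≤ 2 * C * ε := by
      intro s
      have h1 : Real.exp (P s) - Real.exp (Q s)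
          = Real.exp (Q s) * (Real.exp (P s - Q s) - 1) := by
        rw [mul_sub, mul_one, ← Real.exp_add]; ring_nf
      rw [h1, abs_mul, Real.abs_exp]
      have h3 : |Real.exp (P s - Q s) - 1| ≤ 2 * |P s - Q s| :=
        Real.abs_exp_sub_one_le ((hPQ s).trans hε1)
      calc Real.exp (Q s) * |Real.exp (P s - Q s) - 1| ≤ C * (2 * ε) := by
            apply mul_le_mul (hexpQ s) (h3.trans (by linarith [hPQ s])) (abs_nonneg _) hC0.le
        _ = 2 * C * ε := by ring
    -- integrability of the integrands
    have hbg : Integrable (fun s => b s - g s) := hb.sub gint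
    have hbga : Integrable (fun s => |b s - g s|) := hbg.abs
    have hba : Integrable (fun s => |b s|) := hb.abs
    have hFb : Integrable (fun s => b s * Real.exp (P s)) := by
      have h := Integrable.bdd_mul hb
        (Real.continuous_exp.comp (prim_cont hb S)).aestronglyMeasurable
        (Filter.Eventually.of_forall fun s => by rw [Function.comp_apply, Real.norm_eq_abs, Real.abs_exp]; exact hexpP s)
      exact h.congr (Filter.Eventually.of_forall fun s => mul_comm _ _)
    have hFg : Integrable (fun s => g s * Real.exp (Q s)) := by
      have h := Integrable.bdd_mul gint
        (Real.continuous_exp.comp (prim_cont gint S)).aestronglyMeasurable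
        (Filter.Eventually.of_forall fun s => by rw [Function.comp_apply, Real.norm_eq_abs, Real.abs_exp]; exact hexpQ s)
      exact h.congr (Filter.Eventually.of_forall fun s => mul_comm _ _)
    -- the identity for g
    have hid : ∫ s in t..S, g s * Real.exp (Q s) = Real.exp (Q t) - 1 := key_cont g gcont t S
    -- estimate of the integral difference
    have hLdiff : |(∫ s in t..S, b s * Real.exp (P s)) - ∫ s in t..S, g s * Real.exp (Q s)|
        ≤ C * ε + 2 * C * K * ε := by
      rw [← intervalIntegral.integral_sub hFb.intervalIntegrable hFg.intervalIntegrable]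
      calc |∫ s in t..S, (b s * Real.exp (P s) - g s * Real.exp (Q s))|
          ≤ ∫ s in t..S, |b s * Real.exp (P s) - g s * Real.exp (Q s)| := by
            simpa [Real.norm_eq_abs] using intervalIntegral.norm_integral_le_integral_norm
              (f := fun s => b s * Real.exp (P s) - g s * Real.exp (Q s)) hts
        _ = ∫ s in Set.Ioc t S, |b s * Real.exp (P s) - g s * Real.exp (Q s)| :=
            intervalIntegral.integral_of_le hts
        _ ≤ ∫ s in Set.Ioc t S, (C * |b s - g s| + 2 * C * ε * |b s|) := by
            apply integral_mono ((hFb.sub hFg).abs.restrict)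
              ((((hbga.const_mul C).add (hba.const_mul (2 * C * ε)))).restrict)
            intro s
            have hdec : b s * Real.exp (P s) - g s * Real.exp (Q s)
                = (b s - g s) * Real.exp (Q s) + b s * (Real.exp (P s) - Real.exp (Q s)) := by ring
            calc |b s * Real.exp (P s) - g s * Real.exp (Q s)|
                ≤ |b s - g s| * Real.exp (Q s) + |b s| * |Real.exp (P s) - Real.exp (Q s)| := by
                  rw [hdec]
                  refine (abs_add_le _ _).trans ?_
                  rw [abs_mul, abs_mul, Real.abs_exp]
              _ ≤ C * |b s - g s| + 2 * C * ε * |b s| := by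
                  have h1 := hexpQ s
                  have h2 := hexp s
                  have h3 := abs_nonneg (b s - g s)
                  have h4 := abs_nonneg (b s)
                  nlinarith
        _ ≤ ∫ s, (C * |b s - g s| + 2 * C * ε * |b s|) :=
            setIntegral_le_integral ((hbga.const_mul C).add (hba.const_mul (2 * C * ε)))
              (Filter.Eventually.of_forall fun s => by positivity)
        _ = C * (∫ s, |b s - g s|) + 2 * C * ε * K := by
            rw [integral_add (hbga.const_mul C) (hba.const_mul (2 * C * ε)),
              MeasureTheory.integral_const_mul, MeasureTheory.integral_const_mul]
        _ ≤ C * ε + 2 * C * K * ε := by nlinarith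
    have hRdiff : |Real.exp (Q t) - Real.exp (P t)| ≤ 2 * C * ε := by
      rw [abs_sub_comm]; exact hexp t
    have : X = ((∫ s in t..S, b s * Real.exp (P s)) - ∫ s in t..S, g s * Real.exp (Q s))
        + ((Real.exp (Q t) - 1) - (Real.exp (P t) - 1)) := by
      rw [hX, ← hid]; ring
    calc |X| ≤ |(∫ s in t..S, b s * Real.exp (P s)) - ∫ s in t..S, g s * Real.exp (Q s)|
        + |Real.exp (Q t) - Real.exp (P t)| := by
          rw [this]
          refine (abs_add_le _ _).trans ?_
          simp
      _ ≤ (C * ε + 2 * C * K * ε) + 2 * C * ε := add_le_add hLdiff hRdiff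
      _ = (3 * C + 2 * C * K) * ε := by ring
  have hX0 : |X| = 0 := by
    by_contra h
    have hpos : 0 < |X| := lt_of_le_of_ne (abs_nonneg X) (Ne.symm h)
    set D := 3 * C + 2 * C * K with hD
    have hD0 : 0 < D := by positivity
    set ε := min 1 (|X| / (2 * D)) with hε
    have hε0 : 0 < ε := lt_min one_pos (by positivity)
    have hε1 : ε ≤ 1 := min_le_left _ _
    have h1 := main ε hε0 hε1
    have h2 : D * ε ≤ D * (|X| / (2 * D)) :=
      mul_le_mul_of_nonneg_left (min_le_right _ _) hD0.le
    have h3 : D * (|X| / (2 * D)) = |X| / 2 := by field_simp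
    rw [h3] at h2
    have h4 : |X| ≤ |X| / 2 := h1.trans h2
    linarith
  have := abs_eq_zero.mp hX0
  rw [hX] at this
  linarith

private lemma icc_eq_prim {β : ℝ → ℝ} {t₀ S : ℝ} (hβ : IntegrableOn β (Set.Icc t₀ S))
    {s : ℝ} (h1 : t₀ ≤ s) (h2 : s ≤ S) :
    (∫ u in Set.Icc s S, β u) = ∫ u in s..S, (Set.Icc t₀ S).indicator β u := by
  have h3 : ∫ u in Set.Icc s S, β u = ∫ u in Set.Icc s S, (Set.Icc t₀ S).indicator β u := by
    refine (setIntegral_congr_fun measurableSet_Icc ?_).symm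
    intro u hu
    exact Set.indicator_of_mem (show u ∈ Set.Icc t₀ S from ⟨h1.trans hu.1, hu.2⟩) β
  rw [h3, integral_Icc_eq_integral_Ioc, ← intervalIntegral.integral_of_le h2]

private lemma key_Icc {β : ℝ → ℝ} {t₀ S : ℝ} (hβ : IntegrableOn β (Set.Icc t₀ S))
    {t : ℝ} (h1 : t₀ ≤ t) (h2 : t ≤ S) :
    ∫ s in Set.Icc t S, β s * Real.exp (∫ u in Set.Icc s S, β u)
      = Real.exp (∫ u in Set.Icc t S, β u) - 1 := by
  have hb0 : Integrable ((Set.Icc t₀ S).indicator β) :=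
    (integrable_indicator_iff measurableSet_Icc).2 hβ
  have e2 : (∫ s in Set.Icc t S, β s * Real.exp (∫ u in Set.Icc s S, β u))
      = ∫ s in t..S, (Set.Icc t₀ S).indicator β s
          * Real.exp (∫ u in s..S, (Set.Icc t₀ S).indicator β u) := by
    rw [integral_Icc_eq_integral_Ioc, intervalIntegral.integral_of_le h2]
    refine setIntegral_congr_fun measurableSet_Ioc ?_
    intro s hs
    have hs1 : t₀ ≤ s := h1.trans hs.1.le
    show β s * Real.exp (∫ u in Set.Icc s S, β u)
      = (Set.Icc t₀ S).indicator β s * Real.exp (∫ u in s..S, (Set.Icc t₀ S).indicator β u)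
    rw [icc_eq_prim hβ hs1 hs.2,
      Set.indicator_of_mem (show s ∈ Set.Icc t₀ S from ⟨hs1, hs.2⟩) β]
  rw [e2, key_integrable hb0 h2, icc_eq_prim hβ h1 h2]

/-- Conditional-expectation form of the solution of the backward equation on
the terminal interval: if `M` is a martingale and
`q(t) = exp(∫_t^S β) · M(t)`, then `q(t) = E[M(S) + ∫_t^S β(s) q(s) ds | 𝒢_t]`. -/
theorem exp_scaled_martingale_solves_bsde {Ω : Type*} [m0 : MeasurableSpace Ω]
    (μ : Measure Ω) [IsProbabilityMeasure μ]
    (t₀ S : ℝ) (ht : t₀ ≤ S)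
    (𝒢 : ℝ → MeasurableSpace Ω) (hmono : Monotone 𝒢) (hle : ∀ t, 𝒢 t ≤ m0)
    (M : ℝ × Ω → ℝ) (hM : Measurable M)
    (hadapted : ∀ t ∈ Set.Icc t₀ S, StronglyMeasurable[𝒢 t] fun ω => M (t, ω))
    (hint : ∀ t ∈ Set.Icc t₀ S, Integrable (fun ω => M (t, ω)) μ)
    (hmart : ∀ t s : ℝ, t₀ ≤ t → t ≤ s → s ≤ S →
      μ[fun ω => M (s, ω) | 𝒢 t] =ᵐ[μ] fun ω => M (t, ω))
    (hMi : ∫⁻ s in Set.Icc t₀ S, ∫⁻ ω, (‖M (s, ω)‖₊ : ℝ≥0∞) ∂μ < ⊤)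
    (β : ℝ → ℝ) (hβ : IntegrableOn β (Set.Icc t₀ S))
    (q : ℝ × Ω → ℝ)
    (hq : ∀ t ω, q (t, ω) = Real.exp (∫ s in Set.Icc t S, β s) * M (t, ω)) :
    ∀ t ∈ Set.Icc t₀ S,
      (fun ω => q (t, ω)) =ᵐ[μ]
        μ[fun ω => M (S, ω) + ∫ s in Set.Icc t S, β s * q (s, ω) | 𝒢 t] := by
  intro t ht'
  obtain ⟨htt₀, htS⟩ := ht'
  have hb0 : Integrable ((Set.Icc t₀ S).indicator β) :=
    (integrable_indicator_iff measurableSet_Icc).2 hβ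
  set ν : Measure ℝ := volume.restrict (Set.Icc t S) with hν
  set K : ℝ := ∫ u in Set.Icc t₀ S, |β u| with hKdef
  set C : ℝ := Real.exp K with hCdef
  have hC0 : 0 < C := Real.exp_pos _
  have hiccsub : Set.Icc t S ⊆ Set.Icc t₀ S := Set.Icc_subset_Icc_left htt₀
  have hβts : IntegrableOn β (Set.Icc t S) := hβ.mono_set hiccsub
  have hEpos : ∀ s : ℝ, 0 < Real.exp (∫ u in Set.Icc s S, β u) := fun s => Real.exp_pos _
  have hEbound : ∀ s ∈ Set.Icc t₀ S, Real.exp (∫ u in Set.Icc s S, β u) ≤ C := by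
    intro s hs
    refine Real.exp_le_exp.2 ?_
    have hsub : Set.Icc s S ⊆ Set.Icc t₀ S := Set.Icc_subset_Icc_left hs.1
    calc ∫ u in Set.Icc s S, β u ≤ ∫ u in Set.Icc s S, |β u| :=
          integral_mono (hβ.mono_set hsub) (hβ.mono_set hsub).abs (fun u => le_abs_self _)
      _ ≤ K := setIntegral_mono_set hβ.abs
          (Filter.Eventually.of_forall fun u => abs_nonneg _) hsub.eventuallyLE
  have hMS : Integrable (fun ω => M (S, ω)) μ := hint S ⟨ht, le_rfl⟩
  set D : ℝ := ∫ ω, |M (S, ω)| ∂μ with hDdef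
  have hD0 : 0 ≤ D := integral_nonneg fun ω => abs_nonneg _
  have hMbound : ∀ s ∈ Set.Icc t₀ S, ∫ ω, |M (s, ω)| ∂μ ≤ D := by
    intro s hs
    have h1 := hmart s S hs.1 hs.2 le_rfl
    calc ∫ ω, |M (s, ω)| ∂μ
        = ∫ ω, |(μ[fun ω => M (S, ω)|𝒢 s]) ω| ∂μ := by
          refine integral_congr_ae ?_
          filter_upwards [h1] with ω hω
          rw [hω]
      _ ≤ ∫ ω, |M (S, ω)| ∂μ := integral_abs_condExp_le _
  -- measurability facts
  have hβν : AEStronglyMeasurable β ν := hβts.aestronglyMeasurable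
  have hEν : AEStronglyMeasurable (fun s => Real.exp (∫ u in Set.Icc s S, β u)) ν := by
    refine ((Real.continuous_exp.comp (prim_cont hb0 S)).aestronglyMeasurable).congr ?_
    filter_upwards [ae_restrict_mem measurableSet_Icc] with s hs
    rw [Function.comp_apply, icc_eq_prim hβ (htt₀.trans hs.1) hs.2]
  have hFaesm : AEStronglyMeasurable (fun p : ℝ × Ω => β p.1 * q p) (ν.prod μ) := by
    have h1 : AEStronglyMeasurable
        (fun s => β s * Real.exp (∫ u in Set.Icc s S, β u)) ν := hβν.mul hEν
    have h2 : AEStronglyMeasurable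
        (fun p : ℝ × Ω => β p.1 * Real.exp (∫ u in Set.Icc p.1 S, β u)) (ν.prod μ) :=
      h1.comp_quasiMeasurePreserving Measure.quasiMeasurePreserving_fst
    have h3 : AEStronglyMeasurable (fun p : ℝ × Ω => M p) (ν.prod μ) :=
      hM.stronglyMeasurable.aestronglyMeasurable
    refine (h2.mul h3).congr (Filter.Eventually.of_forall fun p => ?_)
    simp only [Pi.mul_apply, hq p.1 p.2]
    ring
  have hFint : Integrable (fun p : ℝ × Ω => β p.1 * q p) (ν.prod μ) := by
    rw [integrable_prod_iff hFaesm]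
    constructor
    · filter_upwards [ae_restrict_mem measurableSet_Icc] with s hs
      have h2 : Integrable (fun ω =>
          (β s * Real.exp (∫ u in Set.Icc s S, β u)) * M (s, ω)) μ :=
        (hint s (hiccsub hs)).const_mul _
      refine h2.congr (Filter.Eventually.of_forall fun ω => ?_)
      simp only [hq s ω]; ring
    · have hmeas : AEStronglyMeasurable (fun s => ∫ ω, ‖β s * q (s, ω)‖ ∂μ) ν :=
        hFaesm.norm.integral_prod_right'
      refine Integrable.mono ((hβts.abs.const_mul (C * D))) hmeas ?_
      filter_upwards [ae_restrict_mem measurableSet_Icc] with s hs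
      have hsIcc : s ∈ Set.Icc t₀ S := hiccsub hs
      have hcalc : ∫ ω, ‖β s * q (s, ω)‖ ∂μ
          = (|β s| * Real.exp (∫ u in Set.Icc s S, β u)) * ∫ ω, |M (s, ω)| ∂μ := by
        rw [← MeasureTheory.integral_const_mul]
        refine integral_congr_ae (Filter.Eventually.of_forall fun ω => ?_)
        simp only [hq s ω, Real.norm_eq_abs, abs_mul, Real.abs_exp]
        ring
      rw [Real.norm_eq_abs, Real.norm_eq_abs, hcalc,
        abs_of_nonneg (by positivity :
          (0:ℝ) ≤ (|β s| * Real.exp (∫ u in Set.Icc s S, β u)) * ∫ ω, |M (s, ω)| ∂μ),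
        abs_of_nonneg (by positivity : (0:ℝ) ≤ C * D * |β s|)]
      have h1 := hEbound s hsIcc
      have h2 := hMbound s hsIcc
      have h3 := abs_nonneg (β s)
      have h4 := (hEpos s).le
      have h5 : (0:ℝ) ≤ ∫ ω, |M (s, ω)| ∂μ := integral_nonneg fun ω => abs_nonneg _
      have h6 : Real.exp (∫ u in Set.Icc s S, β u) * ∫ ω, |M (s, ω)| ∂μ ≤ C * D :=
        mul_le_mul h1 h2 h5 hC0.le
      have h7 := mul_le_mul_of_nonneg_left h6 h3
      nlinarith
  have hinner : Integrable (fun ω => ∫ s, β s * q (s, ω) ∂ν) μ := hFint.swap.integral_prod_left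
  have hf_int : Integrable
      (fun ω => M (S, ω) + ∫ s in Set.Icc t S, β s * q (s, ω)) μ := hMS.add hinner
  haveI : IsFiniteMeasure (μ.trim (hle t)) := isFiniteMeasure_trim (hle t)
  have hqt : Integrable (fun ω => q (t, ω)) μ :=
    ((hint t ⟨htt₀, htS⟩).const_mul _).congr
      (Filter.Eventually.of_forall fun ω => (hq t ω).symm)
  refine ae_eq_condExp_of_forall_setIntegral_eq (hle t) hf_int
    (fun A _ _ => hqt.integrableOn) (fun A hA _ => ?_) ?_
  · -- set integral equality
    have hAm : MeasurableSet A := hle t A hA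
    have hMcst : ∀ s ∈ Set.Icc t S, ∫ ω in A, M (s, ω) ∂μ = ∫ ω in A, M (S, ω) ∂μ := by
      intro s hs
      have hAs : MeasurableSet[𝒢 s] A := hmono hs.1 A hA
      haveI : IsFiniteMeasure (μ.trim (hle s)) := isFiniteMeasure_trim (hle s)
      have h1 := setIntegral_condExp (hle s) hMS hAs
      rw [← h1]
      refine setIntegral_congr_ae hAm ?_
      filter_upwards [hmart s S (htt₀.trans hs.1) hs.2 le_rfl] with ω hω _
      exact hω.symm
    have hLHS : ∫ ω in A, q (t, ω) ∂μ
        = Real.exp (∫ u in Set.Icc t S, β u) * ∫ ω in A, M (S, ω) ∂μ := by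
      rw [← hMcst t ⟨le_rfl, htS⟩, ← MeasureTheory.integral_const_mul]
      exact setIntegral_congr_ae hAm (Filter.Eventually.of_forall fun ω _ => hq t ω)
    have hsplit : ∫ ω in A, (M (S, ω) + ∫ s in Set.Icc t S, β s * q (s, ω)) ∂μ
        = (∫ ω in A, M (S, ω) ∂μ) + ∫ ω in A, (∫ s in Set.Icc t S, β s * q (s, ω)) ∂μ := by
      rw [integral_add hMS.integrableOn hinner.integrableOn]
    have hFA : Integrable (fun p : ℝ × Ω => β p.1 * q p) (ν.prod (μ.restrict A)) := by
      have h2 : (ν.restrict Set.univ).prod (μ.restrict A)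
          = (ν.prod μ).restrict (Set.univ ×ˢ A) := Measure.prod_restrict _ _
      rw [Measure.restrict_univ] at h2
      rw [h2]
      exact hFint.integrableOn
    have hswap : ∫ ω in A, (∫ s in Set.Icc t S, β s * q (s, ω)) ∂μ
        = ∫ s, (∫ ω in A, β s * q (s, ω) ∂μ) ∂ν :=
      integral_integral_swap hFA.swap
    have hinner_eq : ∀ᵐ s ∂ν, (∫ ω in A, β s * q (s, ω) ∂μ)
        = (β s * Real.exp (∫ u in Set.Icc s S, β u)) * ∫ ω in A, M (S, ω) ∂μ := by
      filter_upwards [ae_restrict_mem measurableSet_Icc] with s hs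
      have h3 : ∫ ω in A, β s * q (s, ω) ∂μ
          = (β s * Real.exp (∫ u in Set.Icc s S, β u)) * ∫ ω in A, M (s, ω) ∂μ := by
        rw [← MeasureTheory.integral_const_mul]
        exact setIntegral_congr_ae hAm
          (Filter.Eventually.of_forall fun ω _ => by rw [hq s ω]; ring)
      rw [h3, hMcst s hs]
    have hcompute : ∫ s, (∫ ω in A, β s * q (s, ω) ∂μ) ∂ν
        = (Real.exp (∫ u in Set.Icc t S, β u) - 1) * ∫ ω in A, M (S, ω) ∂μ := by
      rw [integral_congr_ae hinner_eq, MeasureTheory.integral_mul_const,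
        key_Icc hβ htt₀ htS]
    rw [hLHS, hsplit, hswap, hcompute]
    ring
  · -- strong measurability with respect to 𝒢 t
    have h1 : StronglyMeasurable[𝒢 t]
        (fun ω => Real.exp (∫ u in Set.Icc t S, β u) * M (t, ω)) :=
      stronglyMeasurable_const.mul (hadapted t ⟨htt₀, htS⟩)
    have h2 : (fun ω => q (t, ω))
        = fun ω => Real.exp (∫ u in Set.Icc t S, β u) * M (t, ω) := funext fun ω => hq t ω
    rw [h2]
    exact h1.aestronglyMeasurable
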